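/- Under the greedy recursion f(S_{i+1}) ≥ (1 − 1/k) f(S_i) + (1/k − 2γ) f(S*) with f(S_0) ≥ 0, it follows that f(S_k) ≥ (1 − (1 − 1/k)^k)(1 − 2kγ) f(S*), provided f(S*) ≥ 0 and 0 ≤ γ ≤ 1/(2k). -/

import Mathlib

/-- The greedy recursion `a (i+1) ≥ (1 - 1/k) a i + (1/k - 2γ) c` with `a 0 ≥ 0`
implies `a k ≥ (1 - (1 - 1/k)^k) (1 - 2 k γ) c`. -/
theorem greedy_recursion_bound
    (k : ℕ) (hk : 1 ≤ k) (a : ℕ → ℝ) (γ c : ℝ)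
    (hγ0 : 0 ≤ γ) (hγ : γ ≤ 1 / (2 * k)) (hc : 0 ≤ c)
    (ha0 : 0 ≤ a 0)
    (hrec : ∀ i, i < k →
      (1 - 1 / (k : ℝ)) * a i + (1 / (k : ℝ) - 2 * γ) * c ≤ a (i + 1)) :
    (1 - (1 - 1 / (k : ℝ)) ^ k) * (1 - 2 * k * γ) * c ≤ a k := by
  have hk0 : (0 : ℝ) < k := by exact_mod_cast hk
  have hq0 : (0 : ℝ) ≤ 1 - 1 / k := by
    have : 1 / (k : ℝ) ≤ 1 := by
      rw [div_le_one hk0]; exact_mod_cast hk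
    linarith
  have hγ' : 2 * (k : ℝ) * γ ≤ 1 := by
    rw [le_div_iff₀ (by positivity)] at hγ
    linarith
  have key : ∀ i, i ≤ k → (1 - (1 - 1 / (k : ℝ)) ^ i) * (1 - 2 * k * γ) * c ≤ a i := by
    intro i
    induction i with
    | zero => intro _; simpa using ha0
    | succ n ih =>
      intro hn
      have hn' : n < k := hn
      have ihn := ih (le_of_lt hn')
      have hrecn := hrec n hn'
      have hmul : (1 - 1 / (k : ℝ)) * ((1 - (1 - 1 / (k : ℝ)) ^ n) * (1 - 2 * k * γ) * c)
          ≤ (1 - 1 / (k : ℝ)) * a n := by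
        exact mul_le_mul_of_nonneg_left ihn hq0
      have heq : (1 - (1 - 1 / (k : ℝ)) ^ (n + 1)) * (1 - 2 * k * γ) * c
          = (1 - 1 / (k : ℝ)) * ((1 - (1 - 1 / (k : ℝ)) ^ n) * (1 - 2 * k * γ) * c)
            + (1 / (k : ℝ) - 2 * γ) * c := by
        have hkne : (k : ℝ) ≠ 0 := ne_of_gt hk0
        have hkk : (k : ℝ) * (1 / (k : ℝ)) = 1 := by rw [mul_one_div_cancel hkne]
        linear_combination (-2 * γ * c) * hkk
      rw [heq]
      linarith [hmul, hrecn]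
  exact key k le_rfl
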